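/- (Richter) Let n ≥ 1, let (X, 𝔄) be a measurable space, let f_1,...,f_n : X → ℝ be linearly independent measurable functions, and let μ be a (nonnegative) measure on X such that each f_i is μ-integrable with s_i = ∫_X f_i dμ. Then there exist k ≤ n, pairwise distinct points x_1,...,x_k ∈ X, and positive constants c_1,...,c_k such that s_i = Σ_{j=1}^k c_j f_i(x_j) for all i = 1,...,n; i.e., the finitely atomic measure ν = Σ c_j δ_{x_j} has the same f_i-moments as μ. -/

import Mathlib

open MeasureTheory Set Filter Topology

-- conic Caratheodory: reduce a nonneg combination to one over a linearly independent subfamily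
theorem reduceCone {E : Type*} [AddCommGroup E] [Module ℝ E] :
    ∀ (k : ℕ) (v : Fin k → E) (c : Fin k → ℝ), (∀ j, 0 ≤ c j) →
    ∃ (m : ℕ) (w : Fin m → E) (d : Fin m → ℝ),
      LinearIndependent ℝ w ∧ (∀ j, 0 < d j) ∧ (∀ j, ∃ j', w j = v j') ∧
      ∑ j, d j • w j = ∑ j, c j • v j := by
  intro k
  induction k using Nat.strong_induction_on with
  | _ k IH =>
  match k with
  | 0 =>
    intro v c _
    exact ⟨0, Fin.elim0, Fin.elim0, linearIndependent_empty_type, fun j => j.elim0,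
      fun j => j.elim0, by simp⟩
  | (k+1) =>
    intro v c hc
    -- helper: remove an index with zero coefficient
    have remove : ∀ (c' : Fin (k+1) → ℝ), (∀ j, 0 ≤ c' j) → ∀ (j0 : Fin (k+1)), c' j0 = 0 →
        ∃ (m : ℕ) (w : Fin m → E) (d : Fin m → ℝ),
          LinearIndependent ℝ w ∧ (∀ j, 0 < d j) ∧ (∀ j, ∃ j', w j = v j') ∧
          ∑ j, d j • w j = ∑ j, c' j • v j := by
      intro c' hc' j0 hj0
      obtain ⟨m, w, d, h1, h2, h3, h4⟩ :=
        IH k (Nat.lt_succ_self k) (v ∘ j0.succAbove) (c' ∘ j0.succAbove) (fun j => hc' _)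
      refine ⟨m, w, d, h1, h2, fun j => ?_, ?_⟩
      · obtain ⟨j', hj'⟩ := h3 j
        exact ⟨j0.succAbove j', hj'⟩
      · rw [h4, Fin.sum_univ_succAbove (fun j => c' j • v j) j0, hj0, zero_smul, zero_add]
        rfl
    by_cases hzero : ∃ j0, c j0 = 0
    · obtain ⟨j0, hj0⟩ := hzero
      exact remove c hc j0 hj0
    · push_neg at hzero
      have hcpos : ∀ j, 0 < c j := fun j => lt_of_le_of_ne (hc j) (Ne.symm (hzero j))
      by_cases hli : LinearIndependent ℝ v
      · exact ⟨k+1, v, c, hli, hcpos, fun j => ⟨j, rfl⟩, rfl⟩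
      · rw [Fintype.not_linearIndependent_iff] at hli
        obtain ⟨a, hsum, j1, hj1⟩ := hli
        -- get b with a positive entry
        obtain ⟨b, hbsum, jb, hjb⟩ : ∃ b : Fin (k+1) → ℝ, ∑ j, b j • v j = 0 ∧ ∃ j, 0 < b j := by
          rcases lt_or_gt_of_ne hj1 with h | h
          · exact ⟨-a, by simp [hsum], j1, by simpa using h⟩
          · exact ⟨a, hsum, j1, h⟩
        classical
        set J : Finset (Fin (k+1)) := Finset.univ.filter (fun j => 0 < b j) with hJ
        have hJne : J.Nonempty := ⟨jb, by simp [hJ, hjb]⟩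
        obtain ⟨j0, hj0J, hj0min⟩ := J.exists_min_image (fun j => c j / b j) hJne
        have hbj0 : 0 < b j0 := by simpa [hJ] using hj0J
        set t : ℝ := c j0 / b j0 with ht
        have htpos : 0 < t := div_pos (hcpos j0) hbj0
        set c'' : Fin (k+1) → ℝ := fun j => c j - t * b j with hc''
        have hc''nn : ∀ j, 0 ≤ c'' j := by
          intro j
          by_cases hbj : 0 < b j
          · have : t ≤ c j / b j := hj0min j (by simp [hJ, hbj])
            have := (le_div_iff₀ hbj).mp this
            simp [hc'']; linarith
          · push_neg at hbj
            have : t * b j ≤ 0 := mul_nonpos_of_nonneg_of_nonpos htpos.le hbj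
            have := hcpos j
            simp [hc'']; linarith
        have hc''j0 : c'' j0 = 0 := by
          simp [hc'', ht, div_mul_cancel₀ _ (ne_of_gt hbj0)]
        obtain ⟨m, w, d, h1, h2, h3, h4⟩ := remove c'' hc''nn j0 hc''j0
        refine ⟨m, w, d, h1, h2, h3, ?_⟩
        rw [h4]
        have : ∑ j, c'' j • v j = ∑ j, c j • v j - t • ∑ j, b j • v j := by
          rw [Finset.smul_sum, ← Finset.sum_sub_distrib]
          congr 1; funext j
          simp [hc'', sub_smul, smul_smul]
        rw [this, hbsum, smul_zero, sub_zero]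

theorem richter_aux {X : Type*} [MeasurableSpace X] (μ : Measure X) :
    ∀ (n : ℕ) (f : Fin n → X → ℝ), (∀ i, Measurable (f i)) → (∀ i, Integrable (f i) μ) →
    ∀ S : Set X, MeasurableSet S → μ Sᶜ = 0 →
    ∃ (k : ℕ) (p : Fin k → X) (d : Fin k → ℝ),
      (∀ j, p j ∈ S) ∧ (∀ j, 0 ≤ d j) ∧ ∀ i, (∫ x, f i x ∂μ) = ∑ j, d j * f i (p j) := by
  intro n
  induction n with
  | zero =>
    intro f _ _ S _ _
    exact ⟨0, Fin.elim0, Fin.elim0, fun j => j.elim0, fun j => j.elim0, fun i => i.elim0⟩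
  | succ n IH =>
    intro f hmeas hint S hSm hSc
    classical
    have key : ∀ (g : Fin (n+1) → ℝ) (i0 : Fin (n+1)), g i0 ≠ 0 →
        ∀ (S' : Set X), MeasurableSet S' → μ S'ᶜ = 0 → S' ⊆ S →
        (∀ x ∈ S', ∑ i, g i * f i x = 0) →
        ∃ (k : ℕ) (p : Fin k → X) (d : Fin k → ℝ),
          (∀ j, p j ∈ S) ∧ (∀ j, 0 ≤ d j) ∧
          ∀ i, (∫ x, f i x ∂μ) = ∑ j, d j * f i (p j) := by
      intro g i0 hgi0 S' hS'm hS'c hsub hrel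
      obtain ⟨k, p, d, hp, hd, hm⟩ := IH (fun j => f (i0.succAbove j))
        (fun j => hmeas _) (fun j => hint _) S' hS'm hS'c
      refine ⟨k, p, d, fun j => hsub (hp j), hd, ?_⟩
      have hG : ∀ x ∈ S', f i0 x
          = (-(g i0)⁻¹) * ∑ j : Fin n, g (i0.succAbove j) * f (i0.succAbove j) x := by
        intro x hx
        have h0 := hrel x hx
        rw [Fin.sum_univ_succAbove (fun i => g i * f i x) i0] at h0
        have h1 : g i0 * f i0 x = -∑ j : Fin n, g (i0.succAbove j) * f (i0.succAbove j) x := by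
          linarith
        field_simp
        linarith [h1]
      intro i
      by_cases hi : i = i0
      · subst hi
        set G : X → ℝ := fun x => ∑ j : Fin n, g (i.succAbove j) * f (i.succAbove j) x with hGdef
        have hae : ∀ᵐ x ∂μ, x ∈ S' := by
          rw [ae_iff]; exact hS'c
        have h1 : (∫ x, f i x ∂μ) = (-(g i)⁻¹) * ∫ x, G x ∂μ := by
          rw [← integral_const_mul]
          apply integral_congr_ae
          filter_upwards [hae] with x hx using hG x hx
        have h2 : (∫ x, G x ∂μ)
            = ∑ j : Fin n, g (i.succAbove j) * ∫ x, f (i.succAbove j) x ∂μ := by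
          rw [hGdef, integral_finset_sum]
          · exact Finset.sum_congr rfl fun j _ => integral_const_mul _ _
          · exact fun j _ => (hint _).const_mul _
        rw [h1, h2]
        calc (-(g i)⁻¹) * ∑ j : Fin n, g (i.succAbove j) * ∫ x, f (i.succAbove j) x ∂μ
            = (-(g i)⁻¹) * ∑ j : Fin n, ∑ j',
                g (i.succAbove j) * (d j' * f (i.succAbove j) (p j')) := by
              congr 1
              refine Finset.sum_congr rfl fun j _ => ?_
              rw [hm j, Finset.mul_sum]
          _ = ∑ j', d j' * ((-(g i)⁻¹) * ∑ j : Fin n,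
                g (i.succAbove j) * f (i.succAbove j) (p j')) := by
              rw [Finset.sum_comm, Finset.mul_sum]
              refine Finset.sum_congr rfl fun j' _ => ?_
              simp only [Finset.mul_sum]
              exact Finset.sum_congr rfl fun j _ => by ring
          _ = ∑ j', d j' * f i (p j') := by
              refine Finset.sum_congr rfl fun j' _ => ?_
              rw [← hG _ (hp j')]
      · obtain ⟨z, hz⟩ := Fin.exists_succAbove_eq hi
        rw [← hz]
        exact hm z
    set F : X → (Fin (n+1) → ℝ) := fun x i => f i x with hF
    set s : Fin (n+1) → ℝ := fun i => ∫ x, f i x ∂μ with hs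
    set C : Set (Fin (n+1) → ℝ) := {y | ∃ (k : ℕ) (p : Fin k → X) (d : Fin k → ℝ),
      (∀ j, p j ∈ S) ∧ (∀ j, 0 ≤ d j) ∧ y = ∑ j, d j • F (p j)} with hC
    have hC0 : (0 : Fin (n+1) → ℝ) ∈ C :=
      ⟨0, Fin.elim0, Fin.elim0, fun j => j.elim0, fun j => j.elim0, by simp⟩
    have hCF : ∀ x ∈ S, F x ∈ C := by
      intro x hx
      exact ⟨1, fun _ => x, fun _ => 1, fun _ => hx, fun _ => zero_le_one, by simp⟩
    have hCadd : ∀ y₁ ∈ C, ∀ y₂ ∈ C, y₁ + y₂ ∈ C := by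
      rintro y₁ ⟨k₁, p₁, d₁, hp₁, hd₁, rfl⟩ y₂ ⟨k₂, p₂, d₂, hp₂, hd₂, rfl⟩
      refine ⟨k₁ + k₂, Fin.append p₁ p₂, Fin.append d₁ d₂, ?_, ?_, ?_⟩
      · intro j
        induction j using Fin.addCases with
        | left j => simpa [Fin.append_left] using hp₁ j
        | right j => simpa [Fin.append_right] using hp₂ j
      · intro j
        induction j using Fin.addCases with
        | left j => simpa [Fin.append_left] using hd₁ j
        | right j => simpa [Fin.append_right] using hd₂ j
      · rw [Fin.sum_univ_add]
        simp [Fin.append_left, Fin.append_right]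
    have hCsmul : ∀ (t : ℝ), 0 ≤ t → ∀ y ∈ C, t • y ∈ C := by
      rintro t ht y ⟨k, p, d, hp, hd, rfl⟩
      refine ⟨k, p, fun j => t * d j, hp, fun j => mul_nonneg ht (hd j), ?_⟩
      rw [Finset.smul_sum]
      exact Finset.sum_congr rfl fun j _ => by rw [smul_smul]
    have hCconv : Convex ℝ C := fun y₁ h₁ y₂ h₂ a b ha hb _ =>
      hCadd _ (hCsmul a ha _ h₁) _ (hCsmul b hb _ h₂)
    by_cases hsC : s ∈ C
    · obtain ⟨k, p, d, hp, hd, hsum⟩ := hsC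
      refine ⟨k, p, d, hp, hd, fun i => ?_⟩
      have := congrFun hsum i
      simpa [hs, hF, Finset.sum_apply] using this
    classical
    set e : Fin (n+1) → (Fin (n+1) → ℝ) := fun i j => if i = j then 1 else 0 with he
    have hexp : ∀ (ℓ : (Fin (n+1) → ℝ) →L[ℝ] ℝ) (y : Fin (n+1) → ℝ),
        ℓ y = ∑ i, y i * ℓ (e i) := by
      intro ℓ y
      conv_lhs => rw [pi_eq_sum_univ y]
      rw [map_sum]
      exact Finset.sum_congr rfl fun i _ => by rw [ℓ.map_smul, smul_eq_mul]
    have hint_sum : ∀ g : Fin (n+1) → ℝ,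
        (∫ x, ∑ i, g i * f i x ∂μ) = ∑ i, g i * s i := by
      intro g
      rw [integral_finset_sum _ (fun i _ => (hint i).const_mul _)]
      exact Finset.sum_congr rfl fun i _ => by rw [integral_const_mul, hs]
    have haeS : ∀ᵐ x ∂μ, x ∈ S := by rw [ae_iff]; exact hSc
    -- the uniform finishing move given a suitable functional
    have finish : ∀ (ℓ : (Fin (n+1) → ℝ) →L[ℝ] ℝ), ℓ ≠ 0 →
        (∀ x ∈ S, ℓ (F x) ≤ 0) → 0 ≤ ℓ s →
        ∃ (k : ℕ) (p : Fin k → X) (d : Fin k → ℝ),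
          (∀ j, p j ∈ S) ∧ (∀ j, 0 ≤ d j) ∧
          ∀ i, (∫ x, f i x ∂μ) = ∑ j, d j * f i (p j) := by
      intro ℓ hℓne hℓneg hℓs
      set g : Fin (n+1) → ℝ := fun i => -ℓ (e i) with hg
      set h : X → ℝ := fun x => ∑ i, g i * f i x with hh
      have hhF : ∀ x, h x = -ℓ (F x) := by
        intro x
        rw [hh, hexp ℓ (F x)]
        simp only [hF, hg]
        rw [← Finset.sum_neg_distrib]
        exact Finset.sum_congr rfl fun i _ => by ring
      have hhnn : ∀ x ∈ S, 0 ≤ h x := fun x hx => by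
        rw [hhF]; linarith [hℓneg x hx]
      have hhae : 0 ≤ᵐ[μ] h := by filter_upwards [haeS] with x hx using hhnn x hx
      have hhint : Integrable h μ := integrable_finset_sum _ (fun i _ => (hint i).const_mul _)
      have hhint0 : (∫ x, h x ∂μ) = -ℓ s := by
        rw [hh, hint_sum, hexp ℓ s, ← Finset.sum_neg_distrib]
        exact Finset.sum_congr rfl fun i _ => by rw [hg]; ring
      have hh0 : h =ᵐ[μ] 0 := by
        rw [← integral_eq_zero_iff_of_nonneg_ae hhae hhint]
        have : (∫ x, h x ∂μ) ≤ 0 := by rw [hhint0]; linarith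
        linarith [integral_nonneg_of_ae hhae]
      have hgne : ∃ i0, g i0 ≠ 0 := by
        by_contra hcon
        push_neg at hcon
        apply hℓne
        ext y
        rw [ContinuousLinearMap.zero_apply, hexp ℓ y]
        refine Finset.sum_eq_zero fun i _ => ?_
        have := hcon i
        rw [hg] at this
        simp only [neg_eq_zero] at this
        rw [this, mul_zero]
      obtain ⟨i0, hi0⟩ := hgne
      set S' : Set X := S ∩ {x | h x = 0} with hS'
      have hhm : Measurable h := Finset.measurable_sum _ fun i _ => (hmeas i).const_mul _
      have hS'm : MeasurableSet S' := hSm.inter (hhm (measurableSet_singleton 0))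
      have hS'c : μ S'ᶜ = 0 := by
        rw [hS', compl_inter]
        refine measure_union_null hSc ?_
        have := hh0
        rw [EventuallyEq, ae_iff] at this
        simpa [compl_setOf] using this
      exact key g i0 hi0 S' hS'm hS'c inter_subset_left (fun x hx => hx.2)
    by_cases hspan : Submodule.span ℝ (F '' S) = ⊤
    · -- case B : the cone has nonempty interior
      have hCint : (interior C).Nonempty := by
        rw [hCconv.interior_nonempty_iff_affineSpan_eq_top]
        have h1 : affineSpan ℝ ({(0 : Fin (n+1) → ℝ)} ∪ (fun v => v +ᵥ (0 : Fin (n+1) → ℝ)) '' (F '' S)) = ⊤ := by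
          apply affineSpan_singleton_union_vadd_eq_top_of_span_eq_top
          rwa [Subtype.range_coe]
        have h2 : ({(0 : Fin (n+1) → ℝ)} ∪ (fun v => v +ᵥ (0 : Fin (n+1) → ℝ)) '' (F '' S)) ⊆ C := by
          rintro y (rfl | ⟨z, ⟨x, hx, rfl⟩, rfl⟩)
          · exact hC0
          · simpa [vadd_eq_add, add_zero] using hCF x hx
        have := affineSpan_mono ℝ h2
        rw [h1, top_le_iff] at this
        exact this
      obtain ⟨u0, hu0intC⟩ := hCint
      set D := interior (closure C) with hD
      have hu0D : u0 ∈ D := interior_mono subset_closure hu0intC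
      by_cases hsD : s ∈ D
      · -- then s ∈ C, contradiction
        exfalso
        have hcont : Continuous fun ε : ℝ => s + ε • (s - u0) :=
          continuous_const.add (continuous_id.smul continuous_const)
        have h0 : (fun ε : ℝ => s + ε • (s - u0)) 0 = s := by simp
        have hev : ∀ᶠ ε in 𝓝 (0:ℝ), s + ε • (s - u0) ∈ D :=
          (hcont.tendsto 0).eventually_mem (by simp only [zero_smul, add_zero]; exact isOpen_interior.mem_nhds hsD)
        obtain ⟨ε, hεD, hεpos⟩ :=
          ((hev.filter_mono nhdsWithin_le_nhds).and self_mem_nhdsWithin).exists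
          (f := 𝓝[>] (0:ℝ))
        have hεpos : (0:ℝ) < ε := hεpos
        have hcombo : (ε/(1+ε)) • u0 + (1/(1+ε)) • (s + ε • (s - u0)) = s := by
          have h1ε : (1:ℝ) + ε ≠ 0 := by linarith
          match_scalars <;> (field_simp; try ring)
        have : s ∈ interior C := by
          rw [← hcombo]
          exact hCconv.combo_interior_closure_mem_interior hu0intC
            (interior_subset hεD) (by positivity) (by positivity) (by field_simp; try ring)
        exact hsC (interior_subset this)
      · -- separation
        obtain ⟨ℓ, hℓ⟩ := geometric_hahn_banach_open_point
          (hCconv.closure.interior) isOpen_interior hsD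
        have hCle : ∀ y ∈ C, ℓ y ≤ ℓ s := by
          intro y hy
          have htend : Tendsto (fun t : ℝ => ℓ (t • u0 + (1-t) • y)) (𝓝[>] 0) (𝓝 (ℓ y)) := by
            apply Tendsto.mono_left ?_ nhdsWithin_le_nhds
            have hc : Continuous fun t : ℝ => ℓ (t • u0 + (1-t) • y) :=
              ℓ.continuous.comp ((continuous_id.smul continuous_const).add
                ((continuous_const.sub continuous_id).smul continuous_const))
            have := hc.tendsto 0
            simpa using this
          apply le_of_tendsto htend
          have hIoo : Ioo (0:ℝ) 1 ∈ 𝓝[>] (0:ℝ) := Ioo_mem_nhdsGT_of_mem ⟨le_refl _, one_pos⟩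
          filter_upwards [hIoo] with t ht
          have hmem : t • u0 + (1-t) • y ∈ D := by
            rw [hD]
            exact hCconv.closure.combo_interior_closure_mem_interior hu0D
              (by rw [closure_closure]; exact subset_closure hy)
              ht.1 (by linarith [ht.2]) (by ring)
          exact (hℓ _ hmem).le
        have hℓs0 : 0 ≤ ℓ s := by
          have := hCle 0 hC0
          simpa using this
        have hℓC0 : ∀ y ∈ C, ℓ y ≤ 0 := by
          intro y hy
          by_contra hcon
          push_neg at hcon
          have hy2 : ((ℓ s + 1)/(ℓ y)) • y ∈ C :=
            hCsmul _ (by positivity) y hy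
          have := hCle _ hy2
          rw [ℓ.map_smul, smul_eq_mul, div_mul_cancel₀ _ (ne_of_gt hcon)] at this
          linarith
        have hℓne : ℓ ≠ 0 := by
          intro hcon
          have := hℓ u0 hu0D
          rw [hcon] at this
          simp at this
        exact finish ℓ hℓne (fun x hx => hℓC0 (F x) (hCF x hx)) hℓs0
    · -- case A : proper span, get a functional vanishing on it
      obtain ⟨v, hv⟩ : ∃ v, v ∉ Submodule.span ℝ (F '' S) := by
        by_contra hcon
        push_neg at hcon
        exact hspan (Submodule.eq_top_iff'.mpr hcon)
      obtain ⟨ℓ, u, hℓp, hℓv⟩ := geometric_hahn_banach_closed_point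
        (Submodule.span ℝ (F '' S)).convex
        (Submodule.closed_of_finiteDimensional _) hv
      have hu0 : 0 < u := by simpa using hℓp 0 (Submodule.zero_mem _)
      have hℓ0 : ∀ y ∈ Submodule.span ℝ (F '' S), ℓ y = 0 := by
        intro y hy
        by_contra hne
        have hmem : ((u+1)/(ℓ y)) • y ∈ Submodule.span ℝ (F '' S) :=
          Submodule.smul_mem _ _ hy
        have := hℓp _ hmem
        rw [ℓ.map_smul, smul_eq_mul, div_mul_cancel₀ _ hne] at this
        linarith
      have hℓne : ℓ ≠ 0 := by
        intro hc
        rw [hc] at hℓv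
        simp at hℓv
        linarith
      have hneg : ∀ x ∈ S, ℓ (F x) ≤ 0 := fun x hx =>
        le_of_eq (hℓ0 _ (Submodule.subset_span ⟨x, hx, rfl⟩))
      have hs0 : 0 ≤ ℓ s := by
        have hpt : ∀ᵐ x ∂μ, ∑ i, ℓ (e i) * f i x = 0 := by
          filter_upwards [haeS] with x hx
          have h1 := hℓ0 _ (Submodule.subset_span (⟨x, hx, rfl⟩ : F x ∈ F '' S))
          rw [hexp ℓ (F x)] at h1
          rw [← h1, hF]
          exact Finset.sum_congr rfl fun i _ => by ring
        have h2 : (∫ x, ∑ i, ℓ (e i) * f i x ∂μ) = 0 := by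
          rw [integral_congr_ae hpt, integral_zero]
        rw [hint_sum] at h2
        have h3 : ℓ s = 0 := by
          rw [hexp ℓ s, ← h2]
          exact Finset.sum_congr rfl fun i _ => by ring
        rw [h3]
      exact finish ℓ hℓne hneg hs0

theorem stmt18 {X : Type*} [MeasurableSpace X] (n : ℕ) (hn : 1 ≤ n)
    (f : Fin n → X → ℝ) (hmeas : ∀ i, Measurable (f i))
    (hli : LinearIndependent ℝ f)
    (μ : Measure X) (hint : ∀ i, Integrable (f i) μ) :
    ∃ (k : ℕ) (_ : k ≤ n) (x : Fin k → X) (c : Fin k → ℝ),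
      Function.Injective x ∧ (∀ j, 0 < c j) ∧
      ∀ i, (∫ t, f i t ∂μ) = ∑ j, c j * f i (x j) := by
  classical
  obtain ⟨k0, p, d, _, hd, hm⟩ := richter_aux μ n f hmeas hint Set.univ
    MeasurableSet.univ (by simp)
  set v : Fin k0 → (Fin n → ℝ) := fun j i => f i (p j) with hv
  obtain ⟨m, w, dd, hli', hdd, hrange, hsum⟩ := reduceCone k0 v d hd
  have hmn : m ≤ n := by
    have h1 := hli'.fintype_card_le_finrank
    simpa [Module.finrank_fintype_fun_eq_card] using h1
  choose σ hσ using hrange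
  refine ⟨m, hmn, fun j => p (σ j), dd, ?_, hdd, ?_⟩
  · intro j₁ j₂ h
    have h' : p (σ j₁) = p (σ j₂) := h
    apply hli'.injective
    rw [hσ j₁, hσ j₂, hv]
    funext i
    simp only [h']
  · intro i
    have h1 := congrFun hsum i
    simp only [Finset.sum_apply, Pi.smul_apply, smul_eq_mul] at h1
    rw [hm i]
    have h2 : ∀ j, w j i = f i (p (σ j)) := fun j => by rw [hσ j, hv]
    calc ∑ j, d j * f i (p j) = ∑ j, dd j * w j i := by
          rw [← h1]
      _ = ∑ j, dd j * f i (p (σ j)) :=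
          Finset.sum_congr rfl fun j _ => by rw [h2 j]
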